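/- Let T be a finite tree with at least two vertices, equipped with an edge-length function ℓ assigning a strictly positive real length to each edge, and suppose (T, ℓ) is short-branched. Then for every pair of distinct vertices u, v of T, the deviation D(u,v) is strictly less than one. -/

import Mathlib

open scoped Classical
open Finset

noncomputable section

variable {V : Type*}

/-- A leaf of a graph is a vertex of degree one. -/
def IsLeafVertex [Fintype V] (G : SimpleGraph V) (v : V) : Prop := G.degree v = 1

/-- The finset of leaves of a graph. -/
def leafSet [Fintype V] (G : SimpleGraph V) : Finset V :=
  Finset.univ.filter (fun v => IsLeafVertex G v)

/-- The length of a pseudometric graph: the sum of the lengths of its edges. -/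
def totalLength [Fintype V] (G : SimpleGraph V) (ℓ : Sym2 V → ℝ) : ℝ :=
  ∑ e ∈ G.edgeFinset, ℓ e

/-- The leaf length of a tree: one less than its number of leaves. -/
def leafLength [Fintype V] (G : SimpleGraph V) : ℝ := ((leafSet G).card : ℝ) - 1

/-- `sideComp G u v` is the vertex set of the connected component containing `v` of the
graph obtained from `G` by deleting the vertex `u`: the set of vertices reachable from
`v` by a walk avoiding `u`. -/
def sideComp (G : SimpleGraph V) (u v : V) : Set V :=
  {x | ∃ p : G.Walk v x, u ∉ p.support}

/-- The length of the subspace `T(u,v)`: the sum of the lengths of all edges having at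
least one endpoint in `sideComp G u v`. -/
def sideLength [Fintype V] (G : SimpleGraph V) (ℓ : Sym2 V → ℝ) (u v : V) : ℝ :=
  ∑ e ∈ G.edgeFinset.filter (fun e => ∃ x ∈ e, x ∈ sideComp G u v), ℓ e

/-- The leaf length of the subspace `T(u,v)`: the number of leaves of `G` lying in
`sideComp G u v`. -/
def sideLeafCount [Fintype V] (G : SimpleGraph V) (u v : V) : ℕ :=
  ((leafSet G).filter (fun x => x ∈ sideComp G u v)).card

/-- The deviation `D(u,v)`: the leaf length of `T(u,v)` minus the length of `T(u,v)`. -/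
def deviation [Fintype V] (G : SimpleGraph V) (ℓ : Sym2 V → ℝ) (u v : V) : ℝ :=
  (sideLeafCount G u v : ℝ) - sideLength G ℓ u v

/-- The length of the branch at `(u,w)`: `ℓ {u,w}` plus the sum of the lengths of all
edges with both endpoints in `sideComp G u w`. -/
def branchLength [Fintype V] (G : SimpleGraph V) (ℓ : Sym2 V → ℝ) (u w : V) : ℝ :=
  ℓ s(u, w) + ∑ e ∈ G.edgeFinset.filter (fun e => ∀ x ∈ e, x ∈ sideComp G u w), ℓ e

/-- A pseudometric tree is short-branched if its length equals its leaf length and the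
length of every branch (at a vertex of degree at least 3) is at most its leaf length. -/
def ShortBranched [Fintype V] (G : SimpleGraph V) (ℓ : Sym2 V → ℝ) : Prop :=
  totalLength G ℓ = leafLength G ∧
  ∀ u w : V, 3 ≤ G.degree u → G.Adj u w →
    branchLength G ℓ u w ≤ (sideLeafCount G u w : ℝ)

namespace SimpleGraph


lemma mem_sideComp_self (G : SimpleGraph V) {u v : V} (h : u ≠ v) : v ∈ sideComp G u v :=
  ⟨Walk.nil, by simp [h]⟩

lemma not_mem_sideComp (G : SimpleGraph V) (u v : V) : u ∉ sideComp G u v := by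
  rintro ⟨p, hp⟩; exact hp p.end_mem_support

lemma mem_sideComp_iff_path (G : SimpleGraph V) {u v x : V} :
    x ∈ sideComp G u v ↔ ∃ p : G.Walk v x, p.IsPath ∧ u ∉ p.support :=
  ⟨fun ⟨p, hp⟩ => ⟨p.bypass, p.bypass_isPath, fun h => hp (p.support_bypass_subset h)⟩,
   fun ⟨p, _, hp⟩ => ⟨p, hp⟩⟩

lemma sideComp_adj (G : SimpleGraph V) {u v x y : V} (hx : x ∈ sideComp G u v)
    (hxy : G.Adj x y) (hy : y ≠ u) : y ∈ sideComp G u v := by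
  obtain ⟨p, hp⟩ := hx
  exact ⟨p.concat hxy, by
    rw [Walk.support_concat]
    simp only [List.concat_eq_append, List.mem_append, List.mem_singleton]
    rintro (h | h)
    exacts [hp h, hy h.symm]⟩

lemma sideComp_congr (G : SimpleGraph V) {u v x : V} (hx : x ∈ sideComp G u v) :
    sideComp G u x = sideComp G u v := by
  obtain ⟨p, hp⟩ := hx
  ext y
  constructor
  · rintro ⟨q, hq⟩
    exact ⟨p.append q, by rw [Walk.mem_support_append_iff]; rintro (h | h); exacts [hp h, hq h]⟩
  · rintro ⟨q, hq⟩
    refine ⟨p.reverse.append q, ?_⟩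
    rw [Walk.mem_support_append_iff, Walk.support_reverse, List.mem_reverse]
    rintro (h | h); exacts [hp h, hq h]

lemma mem_sideComp_of_mem_support (G : SimpleGraph V) {u v x y : V} (p : G.Walk v x)
    (hp : u ∉ p.support) (hy : y ∈ p.support) : y ∈ sideComp G u v :=
  ⟨p.takeUntil y hy, fun h => hp (p.support_takeUntil_subset hy h)⟩

lemma adj_mem_sideComp_eq {G : SimpleGraph V} (hT : G.IsTree) {u w a : V}
    (hw : G.Adj u w) (ha : G.Adj u a) (hmem : a ∈ sideComp G u w) : a = w := by
  rw [mem_sideComp_iff_path] at hmem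
  obtain ⟨q, hq, hu⟩ := hmem
  have h1 : (Walk.cons hw q).IsPath := (Walk.cons_isPath_iff _ _).2 ⟨hq, hu⟩
  have h2 : (Walk.cons ha Walk.nil).IsPath := by simp [ha.ne]
  have := (hT.existsUnique_path u a).unique h1 h2
  have hs := congrArg Walk.support this
  rw [Walk.support_cons, Walk.support_cons, Walk.support_nil, q.support_eq_cons] at hs
  simp only [List.cons.injEq] at hs
  exact hs.2.1.symm

lemma neighbor_sideComp_eq {G : SimpleGraph V} (hT : G.IsTree) {u w w' x : V}
    (hw : G.Adj u w) (hw' : G.Adj u w') (hx : x ∈ sideComp G u w)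
    (hx' : x ∈ sideComp G u w') : w = w' := by
  have e1 := sideComp_congr G hx
  have e2 := sideComp_congr G hx'
  have : w' ∈ sideComp G u w := by
    rw [← e1, e2]; exact mem_sideComp_self G hw'.ne
  exact (adj_mem_sideComp_eq hT hw hw' this).symm

lemma sideComp_opp_disjoint {G : SimpleGraph V} (hT : G.IsTree) {u w x : V} (h : G.Adj u w)
    (h1 : x ∈ sideComp G u w) (h2 : x ∈ sideComp G w u) : False := by
  rw [mem_sideComp_iff_path] at h1 h2
  obtain ⟨q, hq, hqu⟩ := h1
  obtain ⟨r, hr, hrw⟩ := h2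
  have hp1 : (Walk.cons h q).IsPath := (Walk.cons_isPath_iff _ _).2 ⟨hq, hqu⟩
  have := (hT.existsUnique_path u x).unique hp1 hr
  apply hrw
  rw [← this, Walk.support_cons]
  exact List.mem_cons_of_mem _ q.start_mem_support

lemma sideComp_opp_cover {G : SimpleGraph V} (hT : G.IsTree) {u w : V} (h : G.Adj u w)
    (x : V) : x ∈ sideComp G u w ∨ x ∈ sideComp G w u := by
  obtain ⟨p0⟩ := hT.isConnected.preconnected w x
  set p := p0.bypass with hp
  by_cases hu : u ∈ p.support
  · right
    refine ⟨p.dropUntil u hu, fun hws => ?_⟩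
    have hnd : p.support.Nodup := p0.bypass_isPath.support_nodup
    have hspec := p.take_spec hu
    have : p.support = (p.takeUntil u hu).support ++ (p.dropUntil u hu).support.tail := by
      conv_lhs => rw [← hspec]
      exact Walk.support_append _ _
    rw [this] at hnd
    have hdisj := List.disjoint_of_nodup_append hnd
    have hwt : w ∈ (p.dropUntil u hu).support.tail := by
      have := (p.dropUntil u hu).support_eq_cons
      rw [this] at hws
      rcases List.mem_cons.1 hws with h' | h'
      · exact absurd h'.symm h.ne
      · exact h'
    exact hdisj (p.takeUntil u hu).start_mem_support hwt
  · exact Or.inl ⟨p, hu⟩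


lemma edge_cases {G : SimpleGraph V} (hT : G.IsTree) {u w a b : V} (h : G.Adj u w)
    (hab : G.Adj a b) (ha : a ∈ sideComp G u w) :
    (a = w ∧ b = u) ∨ b ∈ sideComp G u w := by
  by_cases hbu : b = u
  · subst hbu
    exact Or.inl ⟨adj_mem_sideComp_eq hT h hab.symm ha, rfl⟩
  · exact Or.inr (sideComp_adj G ha hab hbu)

lemma sideLength_eq_branchLength [Fintype V] {G : SimpleGraph V} (hT : G.IsTree)
    {u w : V} (h : G.Adj u w) (ℓ : Sym2 V → ℝ) :
    sideLength G ℓ u w = branchLength G ℓ u w := by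
  unfold sideLength branchLength
  have hset : G.edgeFinset.filter (fun e => ∃ x ∈ e, x ∈ sideComp G u w)
      = insert s(u,w) (G.edgeFinset.filter (fun e => ∀ x ∈ e, x ∈ sideComp G u w)) := by
    ext e
    induction e using Sym2.ind with
    | _ a b =>
      simp only [Finset.mem_filter, Finset.mem_insert, SimpleGraph.mem_edgeFinset]
      constructor
      · rintro ⟨hab, x, hxe, hx⟩
        rcases Sym2.mem_iff.1 hxe with rfl | rfl
        · rcases edge_cases hT h hab hx with ⟨rfl, rfl⟩ | hb
          · exact Or.inl (Sym2.eq_swap)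
          · refine Or.inr ⟨hab, fun y hy => ?_⟩
            rcases Sym2.mem_iff.1 hy with rfl | rfl
            exacts [hx, hb]
        · rcases edge_cases hT h hab.symm hx with ⟨rfl, rfl⟩ | hb
          · exact Or.inl rfl
          · refine Or.inr ⟨hab, fun y hy => ?_⟩
            rcases Sym2.mem_iff.1 hy with rfl | rfl
            exacts [hb, hx]
      · rintro (he | ⟨hab, hall⟩)
        · rw [Sym2.eq_iff] at he
          rcases he with ⟨rfl, rfl⟩ | ⟨rfl, rfl⟩
          · exact ⟨h, b, Sym2.mem_mk_right _ _, mem_sideComp_self G h.ne⟩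
          · exact ⟨h.symm, a, Sym2.mem_mk_left _ _, mem_sideComp_self G h.ne⟩
        · exact ⟨hab, a, Sym2.mem_mk_left _ _, hall a (Sym2.mem_mk_left _ _)⟩
  rw [hset, Finset.sum_insert]
  intro hmem
  rw [Finset.mem_filter] at hmem
  exact not_mem_sideComp G u w (hmem.2 u (Sym2.mem_mk_left _ _))

lemma leafcount_add [Fintype V] {G : SimpleGraph V} (hT : G.IsTree) {u w : V}
    (h : G.Adj u w) :
    sideLeafCount G u w + sideLeafCount G w u = (leafSet G).card := by
  classical
  unfold sideLeafCount
  rw [← Finset.card_filter_add_card_filter_not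
    (p := fun x => x ∈ sideComp G u w) (s := leafSet G)]
  congr 1
  apply congrArg
  apply Finset.filter_congr
  intro x _
  constructor
  · intro hx h1
    exact sideComp_opp_disjoint hT h h1 hx
  · intro hx
    rcases sideComp_opp_cover hT h x with h1 | h1
    · exact absurd h1 hx
    · exact h1

lemma edge_sum [Fintype V] {G : SimpleGraph V} (hT : G.IsTree) {u w : V}
    (h : G.Adj u w) (ℓ : Sym2 V → ℝ) :
    totalLength G ℓ + ℓ s(u,w) = branchLength G ℓ u w + branchLength G ℓ w u := by
  classical
  unfold totalLength branchLength
  have hdisj : Disjoint (G.edgeFinset.filter (fun e => ∀ x ∈ e, x ∈ sideComp G u w))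
      (G.edgeFinset.filter (fun e => ∀ x ∈ e, x ∈ sideComp G w u)) := by
    rw [Finset.disjoint_left]
    intro e h1 h2
    induction e using Sym2.ind with
    | _ a b =>
      rw [Finset.mem_filter] at h1 h2
      exact sideComp_opp_disjoint hT h (h1.2 a (Sym2.mem_mk_left _ _))
        (h2.2 a (Sym2.mem_mk_left _ _))
  have hins : s(u,w) ∉ (G.edgeFinset.filter (fun e => ∀ x ∈ e, x ∈ sideComp G u w)) ∪
      (G.edgeFinset.filter (fun e => ∀ x ∈ e, x ∈ sideComp G w u)) := by
    rw [Finset.mem_union]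
    rintro (hm | hm) <;> rw [Finset.mem_filter] at hm
    · exact not_mem_sideComp G u w (hm.2 u (Sym2.mem_mk_left _ _))
    · exact not_mem_sideComp G w u (hm.2 w (Sym2.mem_mk_right _ _))
  have hcover : G.edgeFinset = insert s(u,w)
      ((G.edgeFinset.filter (fun e => ∀ x ∈ e, x ∈ sideComp G u w)) ∪
       (G.edgeFinset.filter (fun e => ∀ x ∈ e, x ∈ sideComp G w u))) := by
    ext e
    induction e using Sym2.ind with
    | _ a b =>
      simp only [Finset.mem_insert, Finset.mem_union, Finset.mem_filter,
        SimpleGraph.mem_edgeFinset]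
      constructor
      · intro hab
        rcases sideComp_opp_cover hT h a with ha | ha
        · rcases edge_cases hT h hab ha with ⟨rfl, rfl⟩ | hb
          · exact Or.inl Sym2.eq_swap
          · refine Or.inr (Or.inl ⟨hab, fun y hy => ?_⟩)
            rcases Sym2.mem_iff.1 hy with rfl | rfl
            exacts [ha, hb]
        · rcases edge_cases hT h.symm hab ha with ⟨rfl, rfl⟩ | hb
          · exact Or.inl rfl
          · refine Or.inr (Or.inr ⟨hab, fun y hy => ?_⟩)
            rcases Sym2.mem_iff.1 hy with rfl | rfl
            exacts [ha, hb]
      · rintro (he | ⟨hab, _⟩ | ⟨hab, _⟩)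
        · rw [Sym2.eq_iff] at he
          rcases he with ⟨rfl, rfl⟩ | ⟨rfl, rfl⟩
          exacts [h, h.symm]
        · exact hab
        · exact hab
  conv_lhs => rw [hcover]
  rw [Finset.sum_insert hins, Finset.sum_union hdisj]
  have hsw : (s(w,u) : Sym2 V) = s(u,w) := Sym2.eq_swap
  rw [hsw]
  ring

lemma dev_add [Fintype V] {G : SimpleGraph V} (hT : G.IsTree) {u w : V}
    (h : G.Adj u w) (ℓ : Sym2 V → ℝ) (hsb : ShortBranched G ℓ) :
    deviation G ℓ u w + deviation G ℓ w u = 1 - ℓ s(u,w) := by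
  have e1 := sideLength_eq_branchLength hT h ℓ
  have e2 := sideLength_eq_branchLength hT h.symm ℓ
  have l3 := leafcount_add hT h
  have l2 := edge_sum hT h ℓ
  have htot := hsb.1
  unfold leafLength at htot
  unfold deviation
  rw [e1, e2]
  have l3' : (sideLeafCount G u w : ℝ) + (sideLeafCount G w u : ℝ) = ((leafSet G).card : ℝ) := by
    exact_mod_cast congrArg (Nat.cast : ℕ → ℝ) l3
  have hsw : ℓ s(w,u) = ℓ s(u,w) := by rw [Sym2.eq_swap]
  linarith

lemma sideComp_eq_singleton {G : SimpleGraph V} {u w : V}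
    [Fintype V] (h : G.Adj u w) (hd : G.degree w = 1) : sideComp G u w = {w} := by
  have hd2 : (G.neighborFinset w).card = 1 := hd
  have huniq : ∀ y, G.Adj w y → y = u := fun y hy =>
    Finset.card_le_one.1 (le_of_eq hd2) _ ((mem_neighborFinset G w y).2 hy)
      _ ((mem_neighborFinset G w u).2 h.symm)
  ext x
  simp only [Set.mem_singleton_iff]
  constructor
  · intro hx
    rw [mem_sideComp_iff_path] at hx
    obtain ⟨p, hp, hu⟩ := hx
    cases p with
    | nil => rfl
    | cons hadj q =>
      exfalso
      apply hu
      rw [Walk.support_cons]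
      exact List.mem_cons_of_mem _ ((huniq _ hadj) ▸ q.start_mem_support)
  · rintro rfl
    exact mem_sideComp_self G h.ne

lemma deviation_leaf [Fintype V] {G : SimpleGraph V} (hT : G.IsTree) {u w : V}
    (h : G.Adj u w) (hd : G.degree w = 1) (ℓ : Sym2 V → ℝ) :
    deviation G ℓ u w = 1 - ℓ s(u,w) := by
  unfold deviation
  rw [sideLength_eq_branchLength hT h]
  have hs := sideComp_eq_singleton h hd
  have h1 : sideLeafCount G u w = 1 := by
    unfold sideLeafCount
    have he : (leafSet G).filter (fun x => x ∈ sideComp G u w) = {w} := by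
      ext x
      simp only [Finset.mem_filter, Finset.mem_singleton, hs, Set.mem_singleton_iff]
      constructor
      · rintro ⟨-, hxx⟩; exact hxx
      · rintro rfl
        exact ⟨by unfold leafSet; exact Finset.mem_filter.2 ⟨Finset.mem_univ _, hd⟩, rfl⟩
    rw [he, Finset.card_singleton]
  have h2 : G.edgeFinset.filter (fun e => ∀ x ∈ e, x ∈ sideComp G u w) = ∅ := by
    rw [Finset.eq_empty_iff_forall_notMem]
    intro e he
    induction e using Sym2.ind with
    | _ a b =>
      rw [Finset.mem_filter, hs] at he
      have ha : a = w := he.2 a (Sym2.mem_mk_left _ _)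
      have hb : b = w := he.2 b (Sym2.mem_mk_right _ _)
      have hadj := SimpleGraph.mem_edgeFinset.1 he.1
      rw [ha, hb] at hadj
      exact G.irrefl hadj
  unfold branchLength
  rw [h2, Finset.sum_empty, h1]
  push_cast; ring

lemma sideComp_two {G : SimpleGraph V} (hT : G.IsTree) {u w w' : V} (h : G.Adj u w)
    (h' : G.Adj w w') (hne : u ≠ w') (hN : ∀ y, G.Adj w y → y = u ∨ y = w') :
    sideComp G u w = insert w (sideComp G w w') := by
  ext x
  constructor
  · intro hx
    rw [mem_sideComp_iff_path] at hx
    obtain ⟨p, hp, hu⟩ := hx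
    cases p with
    | nil => exact Set.mem_insert _ _
    | @cons _ y _ hadj q =>
      have hyu : y ≠ u := by
        rintro rfl
        exact hu (by rw [Walk.support_cons]; exact List.mem_cons_of_mem _ q.start_mem_support)
      have hy : y = w' := (hN y hadj).resolve_left hyu
      subst hy
      rw [Walk.cons_isPath_iff] at hp
      exact Set.mem_insert_iff.2 (Or.inr ⟨q, hp.2⟩)
  · intro hx
    rcases Set.mem_insert_iff.1 hx with rfl | hx
    · exact mem_sideComp_self G h.ne
    · rw [mem_sideComp_iff_path] at hx
      obtain ⟨p, hp, hw⟩ := hx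
      have hup : u ∉ p.support := by
        intro hup
        have h1 : u ∈ sideComp G w w' := mem_sideComp_of_mem_support G p hw hup
        have h2 : u ∈ sideComp G w u := mem_sideComp_self G h.ne'
        exact hne (neighbor_sideComp_eq hT h' h.symm h1 h2).symm
      refine ⟨Walk.cons h' p, ?_⟩
      rw [Walk.support_cons]
      intro hc
      rcases List.mem_cons.1 hc with rfl | hc
      · exact h.ne rfl
      · exact hup hc

lemma deviation_two [Fintype V] {G : SimpleGraph V} (hT : G.IsTree) {u w w' : V}
    (h : G.Adj u w) (h' : G.Adj w w') (hne : u ≠ w') (hdw : G.degree w ≠ 1)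
    (hN : ∀ y, G.Adj w y → y = u ∨ y = w') (ℓ : Sym2 V → ℝ) :
    deviation G ℓ u w = deviation G ℓ w w' - ℓ s(u,w) := by
  have hs := sideComp_two hT h h' hne hN
  have hlc : sideLeafCount G u w = sideLeafCount G w w' := by
    unfold sideLeafCount
    apply congrArg
    apply Finset.filter_congr
    intro x hx
    have hxw : x ≠ w := by
      rintro rfl
      have : G.degree x = 1 := by
        have := (Finset.mem_filter.1 hx).2
        simpa [IsLeafVertex] using this
      exact hdw this
    rw [hs]
    simp [Set.mem_insert_iff, hxw]
  have hinner : G.edgeFinset.filter (fun e => ∀ x ∈ e, x ∈ sideComp G u w)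
      = insert s(w,w') (G.edgeFinset.filter (fun e => ∀ x ∈ e, x ∈ sideComp G w w')) := by
    ext e
    induction e using Sym2.ind with
    | _ a b =>
      simp only [Finset.mem_filter, Finset.mem_insert, SimpleGraph.mem_edgeFinset]
      constructor
      · rintro ⟨hab, hall⟩
        have ha := hall a (Sym2.mem_mk_left _ _)
        have hb := hall b (Sym2.mem_mk_right _ _)
        rw [hs, Set.mem_insert_iff] at ha hb
        rcases ha with rfl | ha
        · rcases hb with rfl | hb
          · exact (G.irrefl hab).elim
          · have hbw : b = w' := adj_mem_sideComp_eq hT h' hab hb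
            exact Or.inl (by rw [hbw])
        · rcases hb with rfl | hb
          · have haw : a = w' := adj_mem_sideComp_eq hT h' hab.symm ha
            exact Or.inl (by rw [haw]; exact Sym2.eq_swap)
          · refine Or.inr ⟨hab, fun y hy => ?_⟩
            rcases Sym2.mem_iff.1 hy with rfl | rfl
            exacts [ha, hb]
      · rintro (he | ⟨hab, hall⟩)
        · rw [Sym2.eq_iff] at he
          have hcase : (a = w ∧ b = w') ∨ (a = w' ∧ b = w) := he
          refine ⟨?_, ?_⟩
          · rcases hcase with ⟨rfl, rfl⟩ | ⟨rfl, rfl⟩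
            exacts [h', h'.symm]
          · intro y hy
            rw [hs, Set.mem_insert_iff]
            rcases Sym2.mem_iff.1 hy with rfl | rfl <;>
              rcases hcase with ⟨rfl, rfl⟩ | ⟨rfl, rfl⟩
            · exact Or.inl rfl
            · exact Or.inr (mem_sideComp_self G h'.ne)
            · exact Or.inr (mem_sideComp_self G h'.ne)
            · exact Or.inl rfl
        · refine ⟨hab, fun y hy => ?_⟩
          rw [hs]
          exact Set.mem_insert_iff.2 (Or.inr (hall y hy))
  unfold deviation
  rw [sideLength_eq_branchLength hT h, sideLength_eq_branchLength hT h']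
  unfold branchLength
  rw [hinner, Finset.sum_insert (by
    intro hmem
    rw [Finset.mem_filter] at hmem
    exact not_mem_sideComp G w w' (hmem.2 w (Sym2.mem_mk_left _ _))), hlc]
  ring

lemma dev_le_aux [Fintype V] {G : SimpleGraph V} (hT : G.IsTree) (ℓ : Sym2 V → ℝ)
    (hℓ : ∀ e ∈ G.edgeSet, 0 < ℓ e) (hsb : ShortBranched G ℓ) :
    ∀ n : ℕ, ∀ u w : V, G.Adj u w → (sideComp G u w).ncard ≤ n →
      deviation G ℓ u w ≤ 1 - ℓ s(u,w) := by
  intro n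
  induction n with
  | zero =>
    intro u w h hn
    exfalso
    have hne : (sideComp G u w).Nonempty := ⟨w, mem_sideComp_self G h.ne⟩
    have := (Set.ncard_pos (Set.toFinite _)).2 hne
    omega
  | succ n IH =>
    intro u w h hn
    rcases lt_or_ge (G.degree w) 3 with h3 | h3
    · have hdeg : 0 < G.degree w := by
        rw [SimpleGraph.degree_pos_iff_exists_adj]
        exact ⟨u, h.symm⟩
      have hd12 : G.degree w = 1 ∨ G.degree w = 2 := by omega
      rcases hd12 with hd | hd
      · rw [deviation_leaf hT h hd ℓ]
      · have hd2 : (G.neighborFinset w).card = 2 := hd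
        obtain ⟨a, b, hab, hset⟩ := Finset.card_eq_two.1 hd2
        have hmem : ∀ y, G.Adj w y ↔ (y = a ∨ y = b) := by
          intro y
          rw [← mem_neighborFinset, hset]
          simp
        have hex : ∃ w', G.Adj w w' ∧ u ≠ w' ∧ ∀ y, G.Adj w y → y = u ∨ y = w' := by
          rcases (hmem u).1 h.symm with rfl | rfl
          · exact ⟨b, (hmem b).2 (Or.inr rfl), hab,
              fun y hy => (hmem y).1 hy⟩
          · exact ⟨a, (hmem a).2 (Or.inl rfl), fun hc => hab hc.symm,
              fun y hy => ((hmem y).1 hy).symm⟩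
        obtain ⟨w', h', hne, hN⟩ := hex
        rw [deviation_two hT h h' hne (by omega) hN ℓ]
        have hlt : (sideComp G w w').ncard < (sideComp G u w).ncard := by
          apply Set.ncard_lt_ncard _ (Set.toFinite _)
          rw [sideComp_two hT h h' hne hN]
          exact Set.ssubset_insert (not_mem_sideComp G w w')
        have hIH := IH w w' h' (by omega)
        have hpos := hℓ s(w,w') ((mem_edgeSet G).2 h')
        linarith
    · have key := dev_add hT h ℓ hsb
      have hb := hsb.2 w u h3 h.symm
      have hwu : deviation G ℓ w u = (sideLeafCount G w u : ℝ) - branchLength G ℓ w u := by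
        unfold deviation
        rw [sideLength_eq_branchLength hT h.symm]
      linarith

end SimpleGraph

/-- The product of the factors `D(vᵢ, vᵢ₊₁)/(1 − D(vᵢ₊₁, vᵢ))` along a list of vertices;
applied to the support of the unique path from `v` to `w` this gives the barycentric
coordinate `a(v,w)`. -/
def pathProd [Fintype V] (G : SimpleGraph V) (ℓ : Sym2 V → ℝ) : List V → ℝ
  | a :: b :: rest =>
      (deviation G ℓ a b / (1 - deviation G ℓ b a)) * pathProd G ℓ (b :: rest)
  | _ => 1

/-- **Deviations are less than one** (Lemma A.3 of the paper): in a short-branched tree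
with strictly positive edge lengths, `D(u,v) < 1` for every pair of distinct vertices. -/
theorem deviation_lt_one [Fintype V] [DecidableEq V] (G : SimpleGraph V)
    (ℓ : Sym2 V → ℝ) (hT : G.IsTree) (hV : 1 < Fintype.card V)
    (hℓ : ∀ e ∈ G.edgeSet, 0 < ℓ e) (hsb : ShortBranched G ℓ)
    (u v : V) (huv : u ≠ v) :
    deviation G ℓ u v < 1 := by
  obtain ⟨p0⟩ := hT.isConnected.preconnected u v
  obtain ⟨p, hp⟩ : ∃ p : G.Walk u v, p.IsPath := ⟨p0.bypass, p0.bypass_isPath⟩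
  cases p with
  | nil => exact absurd rfl huv
  | @cons _ w _ hadj q =>
    rw [SimpleGraph.Walk.cons_isPath_iff] at hp
    have hv : v ∈ sideComp G u w := ⟨q, hp.2⟩
    have hcomp : sideComp G u v = sideComp G u w := SimpleGraph.sideComp_congr G hv
    have hdev : deviation G ℓ u v = deviation G ℓ u w := by
      unfold deviation sideLeafCount sideLength
      congr 2
      · apply congrArg
        ext x
        simp only [Finset.mem_filter, hcomp]
      · ext e
        simp only [Finset.mem_filter, hcomp]
    rw [hdev]
    have hmain := SimpleGraph.dev_le_aux hT ℓ hℓ hsb (sideComp G u w).ncard u w hadj le_rfl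
    have hpos := hℓ s(u,w) ((SimpleGraph.mem_edgeSet G).2 hadj)
    linarith
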